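/- Invertibility of I - JW: let Λ be positive diagonal and W satisfy 2Λ - ΛW - WᵀΛ ≻ 0. Then for every diagonal matrix J with diagonal entries in [0,1], the matrix I - JW is invertible. -/

import Mathlib

open Matrix

/-- Proposition 3: if `2Λ - ΛW - WᵀΛ ≻ 0` for a positive diagonal `Λ`, then
`I - JW` is invertible for every diagonal `J` with entries in `[0,1]`. -/
theorem I_sub_JW_invertible
    {n : ℕ} (W : Matrix (Fin n) (Fin n) ℝ)
    (d : Fin n → ℝ) (hd : ∀ i, 0 < d i)
    (hW : ((2 : ℝ) • Matrix.diagonal d - Matrix.diagonal d * W -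
        Wᵀ * Matrix.diagonal d).PosDef)
    (j : Fin n → ℝ) (hj : ∀ i, 0 ≤ j i ∧ j i ≤ 1) :
    IsUnit (1 - Matrix.diagonal j * W) := by
  rw [Matrix.isUnit_iff_isUnit_det, isUnit_iff_ne_zero]
  intro hdet
  obtain ⟨v, hv0, hv⟩ := (Matrix.exists_mulVec_eq_zero_iff).2 hdet
  set y := W *ᵥ v with hy
  have hvy : ∀ i, v i = j i * y i := by
    intro i
    have h := congrFun hv i
    rw [Matrix.sub_mulVec, ← Matrix.mulVec_mulVec] at h
    simpa [Matrix.mulVec_diagonal, sub_eq_zero, ← hy] using h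
  have hpos := hW.dotProduct_mulVec_pos hv0
  simp only [star_trivial] at hpos
  have hcalc : dotProduct v (((2 : ℝ) • Matrix.diagonal d - Matrix.diagonal d * W -
      Wᵀ * Matrix.diagonal d) *ᵥ v)
      = ∑ i, 2 * d i * (v i * v i - v i * y i) := by
    rw [Matrix.sub_mulVec, Matrix.sub_mulVec, dotProduct_sub, dotProduct_sub]
    have h1 : dotProduct v (((2 : ℝ) • Matrix.diagonal d) *ᵥ v)
        = ∑ i, 2 * (d i * (v i * v i)) := by
      simp [Matrix.smul_mulVec, Matrix.mulVec_diagonal, dotProduct,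
        mul_comm, mul_assoc, mul_left_comm]
    have h2 : dotProduct v ((Matrix.diagonal d * W) *ᵥ v)
        = ∑ i, d i * (v i * y i) := by
      rw [← Matrix.mulVec_mulVec, ← hy]
      simp [Matrix.mulVec_diagonal, dotProduct, mul_comm, mul_assoc, mul_left_comm]
    have h3 : dotProduct v ((Wᵀ * Matrix.diagonal d) *ᵥ v)
        = ∑ i, d i * (v i * y i) := by
      rw [← Matrix.mulVec_mulVec, Matrix.dotProduct_mulVec, Matrix.vecMul_transpose, ← hy]
      simp [Matrix.mulVec_diagonal, dotProduct, mul_comm, mul_assoc, mul_left_comm]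
    rw [h1, h2, h3]
    rw [← Finset.sum_sub_distrib, ← Finset.sum_sub_distrib]
    apply Finset.sum_congr rfl
    intro i _
    ring
  rw [hcalc] at hpos
  have hnonpos : ∑ i, 2 * d i * (v i * v i - v i * y i) ≤ 0 := by
    apply Finset.sum_nonpos
    intro i _
    have hji := hj i
    have : v i * v i - v i * y i = j i * (j i - 1) * (y i * y i) := by
      rw [hvy i]; ring
    rw [this]
    have h1 : j i * (j i - 1) ≤ 0 :=
      mul_nonpos_of_nonneg_of_nonpos hji.1 (by linarith [hji.2])
    have := mul_nonpos_of_nonpos_of_nonneg h1 (mul_self_nonneg (y i))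
    nlinarith [(hd i).le]
  linarith
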